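/- Fix ε > 0. Let M be the randomised mechanism that, given a dataset D of size N, outputs the vector Δω(D) + W, where Δω(D) is the vector of all update counts (Δα_{i,j}(D), Δβ_{i,j}(D))_{i∈I, j∈{0,1}^{π_i}} and W is a vector of independent Laplace random variables each with scale 2|I|/ε; optionally each coordinate of the output is then clamped to the interval [0, N]. Then M is ε-differentially private: for every pair of neighbouring datasets D, D̃ of size N and every measurable set B of output vectors, Pr[M(D) ∈ B] ≤ e^ε · Pr[M(D̃) ∈ B]. -/

import Mathlib

open MeasureTheory Finset
open scoped ENNReal

/-- The Laplace distribution on `ℝ` with scale `b`: the measure with density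
`x ↦ (1/(2b))·exp(−|x|/b)` with respect to Lebesgue measure. -/
noncomputable def laplaceMeasure (b : ℝ) : Measure ℝ :=
  MeasureTheory.volume.withDensity fun x => ENNReal.ofReal (1 / (2 * b) * Real.exp (-|x| / b))

section LaplaceAux

lemma laplace_dens_meas (b : ℝ) :
    Measurable fun x : ℝ => ENNReal.ofReal (1 / (2 * b) * Real.exp (-|x| / b)) :=
  (continuous_const.mul (((continuous_abs.neg).div_const b).rexp)).measurable.ennreal_ofReal

lemma map_add_withDensity (g : ℝ → ℝ≥0∞) (hg : Measurable g) (c : ℝ) :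
    (MeasureTheory.volume.withDensity g).map (· + c)
      = MeasureTheory.volume.withDensity (fun x => g (x - c)) := by
  have hgc : Measurable fun x : ℝ => g (x - c) := hg.comp (measurable_sub_const c)
  ext s hs
  rw [Measure.map_apply (measurable_add_const c) hs,
    withDensity_apply _ (hs.preimage (measurable_add_const c)), withDensity_apply _ hs]
  have hmp : MeasurePreserving (· + c) (volume : Measure ℝ) volume :=
    measurePreserving_add_right volume c
  have := hmp.setLIntegral_comp_preimage hs (f := fun y => g (y - c)) hgc
  simpa using this

lemma lap_shift (b c : ℝ) :
    (laplaceMeasure b).map (· + c)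
      = MeasureTheory.volume.withDensity
          (fun x => ENNReal.ofReal (1 / (2 * b) * Real.exp (-|x - c| / b))) := by
  unfold laplaceMeasure
  exact map_add_withDensity _ (laplace_dens_meas b) c

instance laplace_sigmaFinite (b : ℝ) : SigmaFinite (laplaceMeasure b) := by
  unfold laplaceMeasure; infer_instance

lemma lap_le (b : ℝ) (hb : 0 < b) (c : ℝ) :
    (laplaceMeasure b).map (· + c)
      ≤ ENNReal.ofReal (Real.exp (|c| / b)) • laplaceMeasure b := by
  rw [lap_shift]
  unfold laplaceMeasure
  rw [← withDensity_smul _ (laplace_dens_meas b)]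
  rw [Measure.le_iff]
  intro s hs
  rw [withDensity_apply _ hs, withDensity_apply _ hs]
  refine lintegral_mono fun x => ?_
  simp only [Pi.smul_apply, smul_eq_mul]
  rw [← ENNReal.ofReal_mul (Real.exp_nonneg _)]
  apply ENNReal.ofReal_le_ofReal
  have htri : |x| ≤ |c| + |x - c| := by
    have := abs_add_le c (x - c); simpa using this
  have h1 : Real.exp (-|x - c| / b) ≤ Real.exp (|c| / b) * Real.exp (-|x| / b) := by
    rw [← Real.exp_add, ← add_div]
    apply Real.exp_le_exp.2
    apply div_le_div_of_nonneg_right ?_ hb.le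
    linarith
  calc 1 / (2 * b) * Real.exp (-|x - c| / b)
      ≤ 1 / (2 * b) * (Real.exp (|c| / b) * Real.exp (-|x| / b)) :=
        mul_le_mul_of_nonneg_left h1 (by positivity)
    _ = Real.exp (|c| / b) * (1 / (2 * b) * Real.exp (-|x| / b)) := by ring

lemma pi_mono_my {ι : Type*} [Fintype ι] {α : ι → Type*} [∀ i, MeasurableSpace (α i)]
    {μ ν : (i : ι) → Measure (α i)} (h : ∀ i, μ i ≤ ν i) :
    Measure.pi μ ≤ Measure.pi ν := by
  have houter : (OuterMeasure.pi fun i => (μ i).toOuterMeasure)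
      ≤ OuterMeasure.pi fun i => (ν i).toOuterMeasure := by
    unfold OuterMeasure.pi
    refine OuterMeasure.le_boundedBy.mpr fun s => (OuterMeasure.boundedBy_le s).trans ?_
    simp only [piPremeasure]
    exact Finset.prod_le_prod' fun i _ => Measure.le_iff'.1 (h i) _
  rw [Measure.le_iff]; intro s hs
  rw [Measure.pi_def, Measure.pi_def, toMeasure_apply _ _ hs, toMeasure_apply _ _ hs]
  exact houter s

lemma pi_smul_my {ι : Type*} [Fintype ι] {α : ι → Type*} [∀ i, MeasurableSpace (α i)]
    (μ : (i : ι) → Measure (α i)) [∀ i, SigmaFinite (μ i)] (k : ι → ℝ≥0∞) (hk : ∀ i, k i ≠ ⊤) :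
    Measure.pi (fun i => k i • μ i) = (∏ i, k i) • Measure.pi μ := by
  haveI : ∀ i, SigmaFinite (k i • μ i) := by
    intro i
    rw [← withDensity_const]
    exact SigmaFinite.withDensity_of_ne_top' fun _ => hk i
  refine Measure.pi_eq fun s hs => ?_
  simp [Measure.smul_apply, Measure.pi_pi, smul_eq_mul, Finset.prod_mul_distrib]

end LaplaceAux

variable {I : Type*}

/-- `Δα_{i,j}(D)`: the number of records `x` in `D` with `x_{π_i} = j` and `x_i = true`. -/
def deltaAlpha (π : I → Finset I) (i : I) (j : {l // l ∈ π i} → Bool)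
    {N : ℕ} (D : Fin N → I → Bool) : ℕ :=
  (Finset.univ.filter fun r : Fin N =>
    (∀ l : {l // l ∈ π i}, D r l = j l) ∧ D r i = true).card

/-- `Δβ_{i,j}(D)`: the number of records `x` in `D` with `x_{π_i} = j` and `x_i = false`. -/
def deltaBeta (π : I → Finset I) (i : I) (j : {l // l ∈ π i} → Bool)
    {N : ℕ} (D : Fin N → I → Bool) : ℕ :=
  (Finset.univ.filter fun r : Fin N =>
    (∀ l : {l // l ∈ π i}, D r l = j l) ∧ D r i = false).card

/-- The vector `Δω(D)` of all posterior update counts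
`(Δα_{i,j}(D), Δβ_{i,j}(D))_{i∈I, j∈{0,1}^{π_i}}`, indexed by triples `((i, j), b)`
where `b = true` selects the `Δα` coordinate and `b = false` the `Δβ` coordinate. -/
def updateVec (π : I → Finset I) {N : ℕ} (D : Fin N → I → Bool)
    (p : ((i : I) × ({l // l ∈ π i} → Bool)) × Bool) : ℝ :=
  if p.2 then (deltaAlpha π p.1.1 p.1.2 D : ℝ) else (deltaBeta π p.1.1 p.1.2 D : ℝ)

section SensitivityAux

variable [Fintype I] [DecidableEq I] (π : I → Finset I) {N : ℕ}

set_option linter.unusedSectionVars false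

/-- classification of a record for node `i` -/
def cls (i : I) (E : Fin N → I → Bool) (r : Fin N) : ({l // l ∈ π i} → Bool) × Bool :=
  (fun l => E r l, E r i)

lemma deltaAlpha_eq (i : I) (j : {l // l ∈ π i} → Bool) (D : Fin N → I → Bool) :
    deltaAlpha π i j D = (Finset.univ.filter fun r => cls π i D r = (j, true)).card := by
  unfold deltaAlpha cls
  congr 1
  apply Finset.filter_congr
  intro r _
  simp [Prod.ext_iff, funext_iff]

lemma deltaBeta_eq (i : I) (j : {l // l ∈ π i} → Bool) (D : Fin N → I → Bool) :
    deltaBeta π i j D = (Finset.univ.filter fun r => cls π i D r = (j, false)).card := by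
  unfold deltaBeta cls
  congr 1
  apply Finset.filter_congr
  intro r _
  simp [Prod.ext_iff, funext_iff]

lemma count_split {i : I} (p : ({l // l ∈ π i} → Bool) × Bool) (E : Fin N → I → Bool)
    (diff : Finset (Fin N)) :
    (Finset.univ.filter fun r => cls π i E r = p).card
      = (diff.filter fun r => cls π i E r = p).card
        + ((Finset.univ \ diff).filter fun r => cls π i E r = p).card := by
  rw [← Finset.card_union_of_disjoint (Finset.disjoint_filter_filter Finset.disjoint_sdiff),
    ← Finset.filter_union, Finset.union_sdiff_of_subset (Finset.subset_univ _)]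

lemma sum_fiber (E : Fin N → I → Bool) (i : I) (diff : Finset (Fin N)) :
    ∑ p : ({l // l ∈ π i} → Bool) × Bool,
      ((diff.filter fun r => cls π i E r = p).card : ℝ) = diff.card := by
  rw [← Nat.cast_sum]
  norm_cast
  exact (Finset.card_eq_sum_card_fiberwise fun r _ => Finset.mem_univ (cls π i E r)).symm

lemma per_i_bound (i : I) (D D' : Fin N → I → Bool)
    (diff : Finset (Fin N)) (hdiff : ∀ r, r ∉ diff → D r = D' r) :
    ∑ p : ({l // l ∈ π i} → Bool) × Bool,
      |((Finset.univ.filter fun r => cls π i D r = p).card : ℝ)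
        - (Finset.univ.filter fun r => cls π i D' r = p).card|
      ≤ 2 * diff.card := by
  have key : ∀ p : ({l // l ∈ π i} → Bool) × Bool,
      |((Finset.univ.filter fun r => cls π i D r = p).card : ℝ)
        - (Finset.univ.filter fun r => cls π i D' r = p).card|
      ≤ (diff.filter fun r => cls π i D r = p).card
        + (diff.filter fun r => cls π i D' r = p).card := by
    intro p
    have hsame : ((Finset.univ \ diff).filter fun r => cls π i D r = p)
        = ((Finset.univ \ diff).filter fun r => cls π i D' r = p) := by
      apply Finset.filter_congr
      intro r hr
      rw [Finset.mem_sdiff] at hr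
      have : cls π i D r = cls π i D' r := by unfold cls; rw [hdiff r hr.2]
      rw [this]
    rw [count_split π p D diff, count_split π p D' diff, hsame]
    push_cast
    rw [add_sub_add_right_eq_sub]
    exact (abs_sub _ _).trans (by simp [abs_of_nonneg])
  calc ∑ p : ({l // l ∈ π i} → Bool) × Bool,
      |((Finset.univ.filter fun r => cls π i D r = p).card : ℝ)
        - (Finset.univ.filter fun r => cls π i D' r = p).card|
      ≤ ∑ p : ({l // l ∈ π i} → Bool) × Bool,
          (((diff.filter fun r => cls π i D r = p).card : ℝ)
            + (diff.filter fun r => cls π i D' r = p).card) :=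
        Finset.sum_le_sum fun p _ => key p
    _ = 2 * diff.card := by
        rw [Finset.sum_add_distrib, sum_fiber π D i diff, sum_fiber π D' i diff]; ring

lemma sensitivity (D D' : Fin N → I → Bool)
    (hneighbour : ∀ r r' : Fin N, D r ≠ D' r → D r' ≠ D' r' → r = r') :
    ∑ p : ((i : I) × ({l // l ∈ π i} → Bool)) × Bool,
      |updateVec π D p - updateVec π D' p| ≤ 2 * Fintype.card I := by
  classical
  set diff : Finset (Fin N) := Finset.univ.filter fun r => D r ≠ D' r with hdiffdef
  have hdiff : ∀ r, r ∉ diff → D r = D' r := by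
    intro r hr
    by_contra h
    exact hr (by simp [hdiffdef, h])
  have hcard : (diff.card : ℝ) ≤ 1 := by
    have : diff.card ≤ 1 := Finset.card_le_one.mpr (by
      intro a ha b hb
      rw [hdiffdef, Finset.mem_filter] at ha hb
      exact hneighbour a b ha.2 hb.2)
    exact_mod_cast this
  have step : ∑ p : ((i : I) × ({l // l ∈ π i} → Bool)) × Bool,
      |updateVec π D p - updateVec π D' p|
      = ∑ i : I, ∑ p : ({l // l ∈ π i} → Bool) × Bool,
          |((Finset.univ.filter fun r => cls π i D r = p).card : ℝ)
            - (Finset.univ.filter fun r => cls π i D' r = p).card| := by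
    rw [Fintype.sum_prod_type, ← Finset.univ_sigma_univ, Finset.sum_sigma]
    refine Finset.sum_congr rfl fun i _ => ?_
    rw [Fintype.sum_prod_type]
    refine Finset.sum_congr rfl fun j _ => ?_
    refine Finset.sum_congr rfl fun y _ => ?_
    cases y <;> simp [updateVec, deltaAlpha_eq π, deltaBeta_eq π]
  rw [step]
  calc ∑ i : I, ∑ p : ({l // l ∈ π i} → Bool) × Bool,
        |((Finset.univ.filter fun r => cls π i D r = p).card : ℝ)
          - (Finset.univ.filter fun r => cls π i D' r = p).card|
      ≤ ∑ _i : I, 2 * (diff.card : ℝ) :=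
        Finset.sum_le_sum fun i _ => per_i_bound π i D D' diff hdiff
    _ = Fintype.card I * (2 * diff.card) := by simp [Finset.sum_const, mul_comm]
    _ ≤ Fintype.card I * (2 * 1) := by
        apply mul_le_mul_of_nonneg_left (by linarith) (by positivity)
    _ = 2 * Fintype.card I := by ring

end SensitivityAux

/-- The Laplace mechanism on posterior updates: output `Δω(D) + W` where the `W`
coordinates are i.i.d. Laplace with scale `2|I|/ε`; if `clamp = true`, each output
coordinate is further clamped to `[0, N]`. -/
noncomputable def laplaceMech [Fintype I] [DecidableEq I] (π : I → Finset I)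
    (ε : ℝ) (clamp : Bool) {N : ℕ} (D : Fin N → I → Bool) :
    Measure (((i : I) × ({l // l ∈ π i} → Bool)) × Bool → ℝ) :=
  (Measure.pi fun _ : ((i : I) × ({l // l ∈ π i} → Bool)) × Bool =>
      laplaceMeasure (2 * Fintype.card I / ε)).map
    fun w idx =>
      (if clamp then fun x : ℝ => max 0 (min x N) else id) (updateVec π D idx + w idx)

/-- The Laplace mechanism on posterior updates (with or without clamping to `[0,N]`)
is `ε`-differentially private: for neighbouring datasets `D, D̃` and every measurable
set `B` of outputs, `Pr[M(D) ∈ B] ≤ e^ε · Pr[M(D̃) ∈ B]`. -/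
theorem stmt_1 [Fintype I] [DecidableEq I] (π : I → Finset I) (ε : ℝ) (hε : 0 < ε)
    (clamp : Bool) (N : ℕ) (D D' : Fin N → I → Bool)
    (hneighbour : ∀ r r' : Fin N, D r ≠ D' r → D r' ≠ D' r' → r = r')
    (B : Set (((i : I) × ({l // l ∈ π i} → Bool)) × Bool → ℝ)) (hB : MeasurableSet B) :
    laplaceMech π ε clamp D B ≤ ENNReal.ofReal (Real.exp ε) * laplaceMech π ε clamp D' B := by
  classical
  have hone : (1 : ℝ≥0∞) ≤ ENNReal.ofReal (Real.exp ε) := by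
    rw [← ENNReal.ofReal_one]
    exact ENNReal.ofReal_le_ofReal (Real.one_le_exp hε.le)
  by_cases hI : Fintype.card I = 0
  · haveI hIempty : IsEmpty I := Fintype.card_eq_zero_iff.mp hI
    have hupd : updateVec π D = updateVec π D' := by
      funext p
      exact (hIempty.false p.1.1).elim
    have heq : laplaceMech π ε clamp D = laplaceMech π ε clamp D' := by
      unfold laplaceMech; rw [hupd]
    rw [heq]
    exact le_mul_of_one_le_left (by simp) hone
  · have hcardpos : (0 : ℝ) < Fintype.card I := by
      exact_mod_cast Nat.pos_of_ne_zero hI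
    set b : ℝ := 2 * Fintype.card I / ε with hbdef
    have hb : 0 < b := by positivity
    set c : ((i : I) × ({l // l ∈ π i} → Bool)) × Bool → ℝ :=
      fun idx => updateVec π D idx - updateVec π D' idx with hcdef
    set g : ℝ → ℝ := if clamp then (fun x : ℝ => max 0 (min x N)) else id with hgdef
    have hg : Measurable g := by
      rw [hgdef]
      cases clamp
      · simpa using measurable_id
      · simp only [if_true]
        exact measurable_const.max (measurable_id.min measurable_const)
    set F : (((i : I) × ({l // l ∈ π i} → Bool)) × Bool → ℝ) →
        (((i : I) × ({l // l ∈ π i} → Bool)) × Bool → ℝ) :=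
      fun w idx => g (updateVec π D' idx + w idx) with hFdef
    have hF : Measurable F :=
      measurable_pi_lambda _ fun idx => hg.comp (measurable_const.add (measurable_pi_apply idx))
    set T : (((i : I) × ({l // l ∈ π i} → Bool)) × Bool → ℝ) →
        (((i : I) × ({l // l ∈ π i} → Bool)) × Bool → ℝ) :=
      fun w => w + c with hTdef
    have hT : Measurable T :=
      measurable_pi_iff.mpr fun idx => by
        simp only [hTdef, Pi.add_apply]; exact Measurable.add_const (f := fun x : ((i : I) × ({l // l ∈ π i} → Bool)) × Bool → ℝ => x idx)
          (measurable_pi_apply idx) (c idx)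
    have hcomp : (fun w : ((i : I) × ({l // l ∈ π i} → Bool)) × Bool → ℝ =>
        fun idx => g (updateVec π D idx + w idx)) = F ∘ T := by
      funext w
      funext idx
      simp only [hFdef, hTdef, Function.comp_apply, Pi.add_apply, hcdef]
      congr 1
      ring
    set μ : Measure (((i : I) × ({l // l ∈ π i} → Bool)) × Bool → ℝ) :=
      Measure.pi fun _ => laplaceMeasure b with hμdef
    haveI hsf : ∀ idx : ((i : I) × ({l // l ∈ π i} → Bool)) × Bool,
        SigmaFinite ((laplaceMeasure b).map (· + c idx)) := fun idx => by
      rw [lap_shift]; infer_instance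
    have hmapT : μ.map T = Measure.pi (fun idx => (laplaceMeasure b).map (· + c idx)) := by
      exact (measurePreserving_pi (fun _ => laplaceMeasure b)
        (fun idx => (laplaceMeasure b).map (· + c idx))
        (fun idx => ⟨measurable_add_const (c idx), rfl⟩)).map_eq
    have hprod : (∏ idx : ((i : I) × ({l // l ∈ π i} → Bool)) × Bool,
        ENNReal.ofReal (Real.exp (|c idx| / b))) ≤ ENNReal.ofReal (Real.exp ε) := by
      rw [← ENNReal.ofReal_prod_of_nonneg (fun _ _ => Real.exp_nonneg _)]
      apply ENNReal.ofReal_le_ofReal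
      rw [← Real.exp_sum]
      apply Real.exp_le_exp.2
      have hsens := sensitivity π D D' hneighbour
      rw [← Finset.sum_div, div_le_iff₀ hb]
      have hεb : ε * b = 2 * Fintype.card I := by
        rw [hbdef]
        field_simp
      rw [hεb]
      exact hsens
    have lhs_eq : laplaceMech π ε clamp D B = (μ.map T) (F ⁻¹' B) := by
      unfold laplaceMech
      rw [hcomp]
      rw [Measure.map_apply (hF.comp hT) hB, Measure.map_apply hT (hB.preimage hF)]
      rfl
    have rhs_eq : laplaceMech π ε clamp D' B = μ (F ⁻¹' B) := by
      unfold laplaceMech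
      rw [Measure.map_apply hF hB]
    rw [lhs_eq, rhs_eq, hmapT]
    calc Measure.pi (fun idx => (laplaceMeasure b).map (· + c idx)) (F ⁻¹' B)
        ≤ Measure.pi (fun idx => ENNReal.ofReal (Real.exp (|c idx| / b)) • laplaceMeasure b)
            (F ⁻¹' B) :=
          Measure.le_iff'.1 (pi_mono_my fun idx => lap_le b hb (c idx)) _
      _ = ((∏ idx : ((i : I) × ({l // l ∈ π i} → Bool)) × Bool,
            ENNReal.ofReal (Real.exp (|c idx| / b))) • μ) (F ⁻¹' B) := by
          rw [pi_smul_my _ _ (fun idx => ENNReal.ofReal_ne_top)]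
      _ = (∏ idx : ((i : I) × ({l // l ∈ π i} → Bool)) × Bool,
            ENNReal.ofReal (Real.exp (|c idx| / b))) * μ (F ⁻¹' B) := by
          rw [Measure.smul_apply, smul_eq_mul]
      _ ≤ ENNReal.ofReal (Real.exp ε) * μ (F ⁻¹' B) := mul_le_mul_left hprod _
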